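/- For each α ∈ {1,2,3}: (i) ‖B_cell^(−1/2) A^(α) B_cell^(−1/2)‖ ≤ ρ^(−1/2) ‖S_comp^(−1/2)‖; (ii) ‖B_cell^(−1/2) A^(α) B_cell^(−1/2)‖₁ ≤ 6 ρ^(−1/2) ‖S_comp^(−1/2)‖; (iii) ‖(B_cell^(−1/2) A^(α) B_cell^(−1/2))²‖₁ ≤ 6 ρ^(−1) ‖S_comp^(−1)‖. -/

import Mathlib

open Matrix
open scoped Matrix.Norms.L2Operator ComplexOrder Kronecker

noncomputable section

/-- Port helper: the old Mathlib `Matrix.PosSemidef.sqrt` (removed upstream), with its old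
definition via the spectral decomposition. -/
def Matrix.PosSemidef.sqrt {n : Type*} [Fintype n] [DecidableEq n] {A : Matrix n n ℂ}
    (hA : A.PosSemidef) : Matrix n n ℂ :=
  (hA.1.eigenvectorUnitary : Matrix n n ℂ) * diagonal ((↑) ∘ Real.sqrt ∘ hA.1.eigenvalues) *
    (star hA.1.eigenvectorUnitary : Matrix n n ℂ)

/-- The state-register index set, of cardinality `3 + 6 + 7 = 16`, corresponding to the
block partition of rows and columns into sizes `3 + 6 + 7`. -/
abbrev StateIdx : Type := Fin 3 ⊕ (Fin 6 ⊕ Fin 7)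

/-- The three `3 × 6` matrices `C^(1), C^(2), C^(3)` (here indexed by `Fin 3`). -/
def Cmat : Fin 3 → Matrix (Fin 3) (Fin 6) ℂ
  | 0 => !![1, 0, 0, 0, 0, 0; 0, 0, 0, 1, 0, 0; 0, 0, 0, 0, 1, 0]
  | 1 => !![0, 0, 0, 1, 0, 0; 0, 1, 0, 0, 0, 0; 0, 0, 0, 0, 0, 1]
  | 2 => !![0, 0, 0, 0, 1, 0; 0, 0, 0, 0, 0, 1; 0, 0, 1, 0, 0, 0]

/-- `A^(α)`: the `16 × 16` matrix with `C^(α)` as its `(1,2)` block, `(C^(α))ᵀ` as its `(2,1)`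
block, and zero blocks elsewhere, in the block partition `3 + (6 + 7)`. -/
def Amat (α : Fin 3) : Matrix StateIdx StateIdx ℂ :=
  Matrix.fromBlocks 0 (Matrix.fromCols (Cmat α) 0) (Matrix.fromRows (Cmat α)ᵀ 0) 0

/-- `B_cell = diag(ρ I₃, S_comp, I₇)`. -/
def Bcell (ρ : ℝ) (S : Matrix (Fin 6) (Fin 6) ℂ) : Matrix StateIdx StateIdx ℂ :=
  Matrix.fromBlocks ((ρ : ℂ) • 1) 0 0 (Matrix.fromBlocks S 0 0 1)

/-- `M^(−1/2)`: the inverse of the unique positive definite square root of a positive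
definite matrix `M`. -/
def invSqrt {ι : Type*} [Fintype ι] [DecidableEq ι] {M : Matrix ι ι ℂ}
    (hM : M.PosDef) : Matrix ι ι ℂ :=
  hM.posSemidef.sqrt⁻¹

/-- The spatial index set for `N` qubits, of cardinality `2^N`. -/
abbrev QubitIdx (N : ℕ) : Type := Fin N → Fin 2

def sigma01 : Matrix (Fin 2) (Fin 2) ℂ := !![0, 1; 0, 0]

def sigma10 : Matrix (Fin 2) (Fin 2) ℂ := !![0, 0; 1, 0]

/-- The Kronecker (tensor) product `f 0 ⊗ f 1 ⊗ ⋯ ⊗ f (N−1)` of a family of `2 × 2`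
matrices, realized on the index set `Fin N → Fin 2` (position `0` is the leftmost factor). -/
def tensorFamily {N : ℕ} (f : Fin N → Matrix (Fin 2) (Fin 2) ℂ) :
    Matrix (QubitIdx N) (QubitIdx N) ℂ :=
  Matrix.of fun x y => ∏ i, f i (x i) (y i)

/-- The factor at position `p ∈ {0, …, n−1}` of the pure tensor
`I₂^⊗(n−k) ⊗ a ⊗ b^⊗(k−1)` (for `1 ≤ k ≤ n`). -/
def cellFactor (n k : ℕ) (a b : Matrix (Fin 2) (Fin 2) ℂ) (p : ℕ) :
    Matrix (Fin 2) (Fin 2) ℂ :=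
  if p < n - k then 1 else if p = n - k then a else b

/-- `S_k^(α) = I₂^⊗(n(α−1)) ⊗ S_k^cell ⊗ I₂^⊗(n(3−α))` with
`S_k^cell = I₂^⊗(n−k) ⊗ σ01 ⊗ σ10^⊗(k−1) − I₂^⊗(n−k) ⊗ σ10 ⊗ σ01^⊗(k−1)`,
realized on `3n` qubits.  Here `α : Fin 3` is `0`-based and `1 ≤ k ≤ n`. -/
def Smat (n : ℕ) (α : Fin 3) (k : ℕ) :
    Matrix (QubitIdx (3 * n)) (QubitIdx (3 * n)) ℂ :=
  tensorFamily (fun i =>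
      if i.val / n = α.val then cellFactor n k sigma01 sigma10 (i.val % n) else 1) -
    tensorFamily (fun i =>
      if i.val / n = α.val then cellFactor n k sigma10 sigma01 (i.val % n) else 1)

/-- `D^(α) = (1/(2h)) ∑_{k=1}^n S_k^(α)`. -/
def Dmat (n : ℕ) (h : ℝ) (α : Fin 3) : Matrix (QubitIdx (3 * n)) (QubitIdx (3 * n)) ℂ :=
  (1 / (2 * (h : ℂ))) • ∑ k : Fin n, Smat n α (k.val + 1)

/-- The rank-one projector `P_j = |φ_j⟩⟨φ_j|`. -/
def Pmat (φ : Fin 16 → StateIdx → ℂ) (j : Fin 16) : Matrix StateIdx StateIdx ℂ :=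
  Matrix.vecMulVec (φ j) (star (φ j))

/-- `H_jk^(α) := P_j^(α) ⊗ (i λ_j^(α)/(2h)) S_k^(α)`. -/
def Hterm (n : ℕ) (h : ℝ) (lam : Fin 3 → Fin 16 → ℝ) (φ : Fin 3 → Fin 16 → StateIdx → ℂ)
    (α : Fin 3) (j : Fin 16) (k : Fin n) :
    Matrix (StateIdx × QubitIdx (3 * n)) (StateIdx × QubitIdx (3 * n)) ℂ :=
  Pmat (φ α) j ⊗ₖ ((Complex.I * (lam α j : ℂ) / (2 * (h : ℂ))) • Smat n α (k.val + 1))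

/-- The elastic-wave Hamiltonian `H = ∑_{α,j,k} H_jk^(α)`. -/
def Hfull (n : ℕ) (h : ℝ) (lam : Fin 3 → Fin 16 → ℝ) (φ : Fin 3 → Fin 16 → StateIdx → ℂ) :
    Matrix (StateIdx × QubitIdx (3 * n)) (StateIdx × QubitIdx (3 * n)) ℂ :=
  ∑ α : Fin 3, ∑ j : Fin 16, ∑ k : Fin n, Hterm n h lam φ α j k

/-- Ordered product `f (m−1) * f (m−2) * ⋯ * f 0` (largest index leftmost). -/
def prodDesc {M : Type*} [Monoid M] {m : ℕ} (f : Fin m → M) : M :=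
  ((List.finRange m).reverse.map f).prod

/-- Ordered product `f 0 * f 1 * ⋯ * f (m−1)` (smallest index leftmost). -/
def prodAsc {M : Type*} [Monoid M] {m : ℕ} (f : Fin m → M) : M :=
  ((List.finRange m).map f).prod

/-- The first-order Trotter operator `U₁(τ)`: the ordered product of the factors
`exp(−i H_jk^(α) τ)` over all triples `(α, j, k)`, in decreasing lexicographic order
(the factor with the largest `(α, j, k)` leftmost, the factor with the smallest rightmost). -/
def U1 (n : ℕ) (h : ℝ) (lam : Fin 3 → Fin 16 → ℝ) (φ : Fin 3 → Fin 16 → StateIdx → ℂ)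
    (τ : ℝ) : Matrix (StateIdx × QubitIdx (3 * n)) (StateIdx × QubitIdx (3 * n)) ℂ :=
  prodDesc fun α : Fin 3 => prodDesc fun j : Fin 16 => prodDesc fun k : Fin n =>
    NormedSpace.exp ((-(Complex.I * (τ : ℂ))) • Hterm n h lam φ α j k)

/-- The reversed-order product of the factors `exp(−i H_jk^(α) τ)`: increasing
lexicographic order in `(α, j, k)`. -/
def U1rev (n : ℕ) (h : ℝ) (lam : Fin 3 → Fin 16 → ℝ) (φ : Fin 3 → Fin 16 → StateIdx → ℂ)
    (τ : ℝ) : Matrix (StateIdx × QubitIdx (3 * n)) (StateIdx × QubitIdx (3 * n)) ℂ :=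
  prodAsc fun α : Fin 3 => prodAsc fun j : Fin 16 => prodAsc fun k : Fin n =>
    NormedSpace.exp ((-(Complex.I * (τ : ℂ))) • Hterm n h lam φ α j k)

/-- The second-order (symmetric) Trotter operator `U₂(τ) = U₁(τ/2) · Ũ₁(τ/2)`. -/
def U2 (n : ℕ) (h : ℝ) (lam : Fin 3 → Fin 16 → ℝ) (φ : Fin 3 → Fin 16 → StateIdx → ℂ)
    (τ : ℝ) : Matrix (StateIdx × QubitIdx (3 * n)) (StateIdx × QubitIdx (3 * n)) ℂ :=
  U1 n h lam φ (τ / 2) * U1rev n h lam φ (τ / 2)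

end

/-- The trace norm `‖M‖₁ := Tr √(Mᴴ M)` of a complex matrix, where `√` is the positive
semidefinite square root of the positive semidefinite matrix `Mᴴ M`. -/
noncomputable def traceNorm {m n : Type*} [Fintype m] [Fintype n] [DecidableEq n]
    (M : Matrix m n ℂ) : ℝ :=
  ((Matrix.posSemidef_conjTranspose_mul_self M).sqrt).trace.re

section SqrtPort

variable {n : Type*} [Fintype n] [DecidableEq n]

lemma Matrix.PosSemidef.sqrt_eq_cfc {A : Matrix n n ℂ} (hA : A.PosSemidef) :
    hA.sqrt = cfc Real.sqrt A := by
  rw [hA.1.cfc_eq, Matrix.IsHermitian.cfc, Unitary.conjStarAlgAut_apply]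
  rfl

lemma Matrix.PosSemidef.spec_nonneg {A : Matrix n n ℂ} (hA : A.PosSemidef) :
    ∀ x ∈ spectrum ℝ A, 0 ≤ x := by
  intro x hx
  rw [hA.1.spectrum_real_eq_range_eigenvalues] at hx
  obtain ⟨i, rfl⟩ := hx
  exact hA.eigenvalues_nonneg i

lemma Matrix.PosSemidef.posSemidef_sqrt {A : Matrix n n ℂ} (hA : A.PosSemidef) :
    hA.sqrt.PosSemidef := by
  apply Matrix.PosSemidef.mul_mul_conjTranspose_same
  refine Matrix.posSemidef_diagonal_iff.mpr fun i => ?_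
  simp only [Function.comp_apply]
  exact Complex.zero_le_real.mpr (Real.sqrt_nonneg _)

lemma Matrix.PosSemidef.sqrt_mul_self {A : Matrix n n ℂ} (hA : A.PosSemidef) :
    hA.sqrt * hA.sqrt = A := by
  have hsa : IsSelfAdjoint A := hA.1
  rw [hA.sqrt_eq_cfc, ← cfc_mul Real.sqrt Real.sqrt A]
  conv_rhs => rw [← cfc_id' ℝ A]
  apply cfc_congr
  intro x hx
  exact Real.mul_self_sqrt (hA.spec_nonneg x hx)

lemma Matrix.PosSemidef.eq_sqrt_of_sq_eq {A B : Matrix n n ℂ} (hA : A.PosSemidef)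
    (hB : B.PosSemidef) (hAB : A ^ 2 = B) : A = hB.sqrt := by
  have hsa : IsSelfAdjoint A := hA.1
  subst hAB
  rw [hB.sqrt_eq_cfc, ← cfc_pow_id (R := ℝ) A 2, ← cfc_comp Real.sqrt (fun x => x ^ 2) A]
  conv_lhs => rw [← cfc_id' ℝ A]
  apply cfc_congr
  intro x hx
  exact (Real.sqrt_sq (hA.spec_nonneg x hx)).symm

end SqrtPort

section AuxLemmas

set_option linter.unusedSectionVars false

variable {m n : Type*} [Fintype m] [Fintype n] [DecidableEq m] [DecidableEq n]

lemma euclid_sq_norm {α : Type*} [Fintype α] (y : EuclideanSpace ℂ α) :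
    ‖y‖ ^ 2 = ∑ i, ‖y i‖ ^ 2 := by
  rw [EuclideanSpace.norm_eq, Real.sq_sqrt (by positivity)]

omit [DecidableEq m] in
lemma myOpNorm_le_bound (A : Matrix m n ℂ) {c : ℝ} (hc : 0 ≤ c)
    (h : ∀ x : EuclideanSpace ℂ n, ‖(EuclideanSpace.equiv m ℂ).symm (A *ᵥ x)‖ ≤ c * ‖x‖) :
    ‖A‖ ≤ c := by
  rw [Matrix.l2_opNorm_def]
  exact ContinuousLinearMap.opNorm_le_bound _ hc h

lemma norm_offdiag_le (F : Matrix m n ℂ) :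
    ‖(Matrix.fromBlocks 0 F Fᴴ 0 : Matrix (m ⊕ n) (m ⊕ n) ℂ)‖ ≤ ‖F‖ := by
  apply myOpNorm_le_bound _ (norm_nonneg F)
  intro x
  have hmv : (Matrix.fromBlocks 0 F Fᴴ 0 : Matrix (m ⊕ n) (m ⊕ n) ℂ) *ᵥ x =
      Sum.elim (F *ᵥ (x ∘ Sum.inr)) (Fᴴ *ᵥ (x ∘ Sum.inl)) := by
    rw [Matrix.fromBlocks_mulVec]
    simp
  rw [hmv]
  have h1 : ‖(EuclideanSpace.equiv m ℂ).symm (F *ᵥ (x ∘ Sum.inr))‖ ≤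
      ‖F‖ * ‖(EuclideanSpace.equiv n ℂ).symm (x ∘ Sum.inr)‖ :=
    Matrix.l2_opNorm_mulVec F ((EuclideanSpace.equiv n ℂ).symm (x ∘ Sum.inr))
  have h2 : ‖(EuclideanSpace.equiv n ℂ).symm (Fᴴ *ᵥ (x ∘ Sum.inl))‖ ≤
      ‖F‖ * ‖(EuclideanSpace.equiv m ℂ).symm (x ∘ Sum.inl)‖ := by
    have := Matrix.l2_opNorm_mulVec Fᴴ ((EuclideanSpace.equiv m ℂ).symm (x ∘ Sum.inl))
    rwa [Matrix.l2_opNorm_conjTranspose] at this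
  have hx : ‖x‖ ^ 2 = ‖(EuclideanSpace.equiv m ℂ).symm (x ∘ Sum.inl)‖ ^ 2 +
      ‖(EuclideanSpace.equiv n ℂ).symm (x ∘ Sum.inr)‖ ^ 2 := by
    rw [euclid_sq_norm, euclid_sq_norm, euclid_sq_norm, Fintype.sum_sum_type]
    rfl
  have hy : ‖(EuclideanSpace.equiv (m ⊕ n) ℂ).symm
        (Sum.elim (F *ᵥ (x ∘ Sum.inr)) (Fᴴ *ᵥ (x ∘ Sum.inl)))‖ ^ 2 =
      ‖(EuclideanSpace.equiv m ℂ).symm (F *ᵥ (x ∘ Sum.inr))‖ ^ 2 +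
      ‖(EuclideanSpace.equiv n ℂ).symm (Fᴴ *ᵥ (x ∘ Sum.inl))‖ ^ 2 := by
    rw [euclid_sq_norm, euclid_sq_norm, euclid_sq_norm, Fintype.sum_sum_type]
    rfl
  have goal2 : ‖(EuclideanSpace.equiv (m ⊕ n) ℂ).symm
        (Sum.elim (F *ᵥ (x ∘ Sum.inr)) (Fᴴ *ᵥ (x ∘ Sum.inl)))‖ ^ 2 ≤ (‖F‖ * ‖x‖) ^ 2 := by
    rw [hy]
    have ha := pow_le_pow_left₀ (norm_nonneg _) h1 2
    have hb := pow_le_pow_left₀ (norm_nonneg _) h2 2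
    have hx' : (‖F‖ * ‖x‖) ^ 2 = (‖F‖ * ‖(EuclideanSpace.equiv n ℂ).symm (x ∘ Sum.inr)‖) ^ 2 +
        (‖F‖ * ‖(EuclideanSpace.equiv m ℂ).symm (x ∘ Sum.inl)‖) ^ 2 := by
      rw [mul_pow, mul_pow, mul_pow, hx]; ring
    linarith [ha, hb, hx']
  have := Real.sqrt_le_sqrt goal2
  rwa [Real.sqrt_sq (norm_nonneg _), Real.sqrt_sq (by positivity)] at this


lemma norm_fromCols_zero {k : Type*} [Fintype k] [DecidableEq k]
    (Y : Matrix m n ℂ) : ‖Matrix.fromCols Y (0 : Matrix m k ℂ)‖ = ‖Y‖ := by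
  refine (mul_self_inj (norm_nonneg _) (norm_nonneg _)).mp ?_
  have e1 : ‖Matrix.fromCols Y (0 : Matrix m k ℂ)‖ * ‖Matrix.fromCols Y (0 : Matrix m k ℂ)‖
      = ‖Matrix.fromCols Y (0 : Matrix m k ℂ) * (Matrix.fromCols Y (0 : Matrix m k ℂ))ᴴ‖ := by
    conv_lhs => rw [← Matrix.l2_opNorm_conjTranspose (Matrix.fromCols Y (0 : Matrix m k ℂ))]
    rw [← Matrix.l2_opNorm_conjTranspose_mul_self (Matrix.fromCols Y (0 : Matrix m k ℂ))ᴴ,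
      Matrix.conjTranspose_conjTranspose]
  have e2 : Matrix.fromCols Y (0 : Matrix m k ℂ) * (Matrix.fromCols Y (0 : Matrix m k ℂ))ᴴ
      = Y * Yᴴ := by
    rw [Matrix.conjTranspose_fromCols_eq_fromRows_conjTranspose, Matrix.fromCols_mul_fromRows]
    simp
  have e3 : ‖Y * Yᴴ‖ = ‖Y‖ * ‖Y‖ := by
    rw [show Y * Yᴴ = Yᴴᴴ * Yᴴ by rw [Matrix.conjTranspose_conjTranspose],
      Matrix.l2_opNorm_conjTranspose_mul_self, Matrix.l2_opNorm_conjTranspose]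
  rw [e1, e2, e3]


lemma eig_le_norm {k : Type*} [Fintype k] [DecidableEq k] {Q : Matrix k k ℂ}
    (hQ : Q.IsHermitian) (i : k) : hQ.eigenvalues i ≤ ‖Q‖ := by
  set v := hQ.eigenvectorBasis i with hv
  have hv1 : ‖v‖ = 1 := hQ.eigenvectorBasis.orthonormal.1 i
  have hb := Matrix.l2_opNorm_mulVec Q v
  erw [hQ.mulVec_eigenvectorBasis i] at hb
  rw [show (EuclideanSpace.equiv k ℂ).symm
      (hQ.eigenvalues i • (hQ.eigenvectorBasis i).ofLp) = hQ.eigenvalues i • v from rfl,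
    norm_smul, hv1, mul_one, mul_one, Real.norm_eq_abs] at hb
  exact (le_abs_self _).trans hb

lemma traceNorm_le_rank_mul_norm {k : Type*} [Fintype k] [DecidableEq k] (N : Matrix k k ℂ) :
    traceNorm N ≤ (N.rank : ℝ) * ‖N‖ := by
  classical
  set P := Matrix.posSemidef_conjTranspose_mul_self N with hP
  set Q := P.sqrt with hQdef
  have hQpsd : Q.PosSemidef := P.posSemidef_sqrt
  have hQ : Q.IsHermitian := hQpsd.1
  have hnorm : ‖Q‖ = ‖N‖ := by
    refine (mul_self_inj (norm_nonneg _) (norm_nonneg _)).mp ?_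
    rw [← Matrix.l2_opNorm_conjTranspose_mul_self Q, hQ.eq, P.sqrt_mul_self,
      Matrix.l2_opNorm_conjTranspose_mul_self]
  have htrace : traceNorm N = ∑ i, hQ.eigenvalues i := by
    have h1 : Q.trace = ∑ i, (hQ.eigenvalues i : ℂ) := by
      conv_lhs => rw [hQ.spectral_theorem]
      rw [Unitary.conjStarAlgAut_apply, Matrix.trace_mul_cycle, Unitary.coe_star_mul_self, one_mul, Matrix.trace_diagonal]
      rfl
    show Q.trace.re = _
    rw [h1, Complex.re_sum]
    simp
  have hrank : Fintype.card {i // hQ.eigenvalues i ≠ 0} = N.rank := by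
    rw [← hQ.rank_eq_card_non_zero_eigs, ← Matrix.rank_conjTranspose_mul_self Q, hQ.eq,
      hQdef, P.sqrt_mul_self, Matrix.rank_conjTranspose_mul_self]
  rw [htrace, ← Finset.sum_filter_ne_zero]
  have hcard : (Finset.univ.filter fun i => hQ.eigenvalues i ≠ 0).card = N.rank := by
    rw [← hrank, Fintype.card_subtype]
  calc ∑ i ∈ Finset.univ.filter (fun i => hQ.eigenvalues i ≠ 0), hQ.eigenvalues i
      ≤ (Finset.univ.filter fun i => hQ.eigenvalues i ≠ 0).card • ‖N‖ :=
        Finset.sum_le_card_nsmul _ _ _ (fun i _ => (eig_le_norm hQ i).trans hnorm.le)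
    _ = (N.rank : ℝ) * ‖N‖ := by rw [hcard, nsmul_eq_mul]

lemma psd_smul_one {c : ℝ} (hc : 0 ≤ c) :
    ((c : ℂ) • (1 : Matrix m m ℂ)).PosSemidef := by
  rw [Matrix.posSemidef_iff_dotProduct_mulVec]
  constructor
  · show ((c:ℂ) • (1 : Matrix m m ℂ))ᴴ = _
    rw [Matrix.conjTranspose_smul, Matrix.conjTranspose_one]
    congr 1
    simp [Complex.star_def, Complex.conj_ofReal]
  · intro x
    rw [Matrix.smul_mulVec, Matrix.one_mulVec, dotProduct_smul]
    have h1 : (0:ℂ) ≤ (c:ℂ) := by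
      rw [Complex.zero_le_real]; exact hc
    have h2 := dotProduct_star_self_nonneg x
    exact mul_nonneg h1 h2

lemma psd_fromBlocks {A : Matrix m m ℂ} {D : Matrix n n ℂ}
    (hA : A.PosSemidef) (hD : D.PosSemidef) :
    (Matrix.fromBlocks A 0 0 D).PosSemidef := by
  rw [Matrix.posSemidef_iff_dotProduct_mulVec] at hA hD ⊢
  constructor
  · show (Matrix.fromBlocks A 0 0 D)ᴴ = _
    rw [Matrix.fromBlocks_conjTranspose, hA.1.eq, hD.1.eq]
    simp
  · intro x
    rw [Matrix.fromBlocks_mulVec]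
    have : dotProduct (star x)
        (Sum.elim (A *ᵥ (x ∘ Sum.inl) + 0 *ᵥ (x ∘ Sum.inr)) (0 *ᵥ (x ∘ Sum.inl) + D *ᵥ (x ∘ Sum.inr)))
        = dotProduct (star (x ∘ Sum.inl)) (A *ᵥ (x ∘ Sum.inl)) +
          dotProduct (star (x ∘ Sum.inr)) (D *ᵥ (x ∘ Sum.inr)) := by
      simp [dotProduct, Fintype.sum_sum_type]
    rw [this]
    exact add_nonneg (hA.2 _) (hD.2 _)

lemma vec6_five (a b c d e f : ℂ) : ![a,b,c,d,e,f] 5 = f := rfl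

lemma Cmat_mul_conjTranspose (α : Fin 3) : Cmat α * (Cmat α)ᴴ = 1 := by
  fin_cases α <;>
  · ext i j
    fin_cases i <;> fin_cases j <;>
      simp [Cmat, Matrix.mul_apply, Fin.sum_univ_six, Matrix.one_apply, vec6_five,
        Matrix.vecHead, Matrix.vecTail]

lemma Cmat_conjTranspose (α : Fin 3) : (Cmat α)ᴴ = (Cmat α)ᵀ := by
  fin_cases α <;>
  · ext i j
    fin_cases i <;> fin_cases j <;>
      simp [Cmat, Matrix.conjTranspose_apply, Matrix.vecHead, Matrix.vecTail, Matrix.cons_val_succ, vec6_five]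

lemma Cmat_norm (α : Fin 3) : ‖Cmat α‖ = 1 := by
  refine (mul_self_inj (norm_nonneg _) zero_le_one).mp ?_
  rw [one_mul]
  rw [← Matrix.l2_opNorm_conjTranspose (Cmat α),
    ← Matrix.l2_opNorm_conjTranspose_mul_self (Cmat α)ᴴ, Matrix.conjTranspose_conjTranspose,
    Cmat_mul_conjTranspose,
    (CStarRing.norm_one : ‖(1 : Matrix (Fin 3) (Fin 3) ℂ)‖ = 1)]

end AuxLemmas

set_option maxRecDepth 100000
set_option maxHeartbeats 1000000

/-- For each `α ∈ {1,2,3}`: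
(i) `‖B_cell^(−1/2) A^(α) B_cell^(−1/2)‖ ≤ ρ^(−1/2) ‖S_comp^(−1/2)‖`;
(ii) `‖B_cell^(−1/2) A^(α) B_cell^(−1/2)‖₁ ≤ 6 ρ^(−1/2) ‖S_comp^(−1/2)‖`;
(iii) `‖(B_cell^(−1/2) A^(α) B_cell^(−1/2))²‖₁ ≤ 6 ρ^(−1) ‖S_comp^(−1)‖`. -/
theorem elastic_cell_operator_bounds (ρ : ℝ) (hρ : 0 < ρ)
    (S : Matrix (Fin 6) (Fin 6) ℂ) (hS : S.PosDef)
    (hB : (Bcell ρ S).PosDef) (α : Fin 3) :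
    ‖invSqrt hB * Amat α * invSqrt hB‖ ≤ ρ ^ (-(1 / 2) : ℝ) * ‖invSqrt hS‖ ∧
    traceNorm (invSqrt hB * Amat α * invSqrt hB) ≤
      6 * (ρ ^ (-(1 / 2) : ℝ) * ‖invSqrt hS‖) ∧
    traceNorm ((invSqrt hB * Amat α * invSqrt hB) ^ 2) ≤ 6 * (ρ⁻¹ * ‖S⁻¹‖) := by
  classical
  set T : Matrix (Fin 6) (Fin 6) ℂ := invSqrt hS with hTdef
  set sq : Matrix (Fin 6) (Fin 6) ℂ := hS.posSemidef.sqrt with hsqdef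
  have hsq_psd : sq.PosSemidef := hS.posSemidef.posSemidef_sqrt
  have hsq_mul : sq * sq = S := hS.posSemidef.sqrt_mul_self
  have hdetS : S.det ≠ 0 := hS.det_pos.ne'
  have hdetsq : IsUnit sq.det := by
    have h : sq.det * sq.det = S.det := by rw [← Matrix.det_mul, hsq_mul]
    exact isUnit_iff_ne_zero.mpr (fun h0 => hdetS (by rw [← h, h0, mul_zero]))
  have hTsq : T * sq = 1 := Matrix.nonsing_inv_mul _ hdetsq
  have hTherm : T.IsHermitian := hsq_psd.1.inv
  have hTT : T * T = S⁻¹ := by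
    rw [hTdef, invSqrt, ← hsqdef, ← Matrix.mul_inv_rev, hsq_mul]
  set c : ℝ := (Real.sqrt ρ)⁻¹ with hcdef
  have hcpos : 0 < c := inv_pos.mpr (Real.sqrt_pos.mpr hρ)
  have hcρ : ρ ^ (-(1 / 2) : ℝ) = c := by
    rw [hcdef, Real.rpow_neg hρ.le, Real.sqrt_eq_rpow]
  -- the square root of Bcell
  set W : Matrix (Fin 6 ⊕ Fin 7) (Fin 6 ⊕ Fin 7) ℂ := Matrix.fromBlocks sq 0 0 1 with hWdef
  set R : Matrix StateIdx StateIdx ℂ :=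
    Matrix.fromBlocks ((Real.sqrt ρ : ℂ) • 1) 0 0 W with hRdef
  have hRpsd : R.PosSemidef :=
    psd_fromBlocks (psd_smul_one (Real.sqrt_nonneg ρ))
      (psd_fromBlocks hsq_psd Matrix.PosSemidef.one)
  have hR2 : R ^ 2 = Bcell ρ S := by
    rw [pow_two, hRdef, hWdef, Bcell, Matrix.fromBlocks_multiply, Matrix.fromBlocks_multiply]
    simp only [Matrix.mul_zero, Matrix.zero_mul, add_zero, zero_add]
    rw [Matrix.fromBlocks_inj]
    refine ⟨?_, rfl, rfl, ?_⟩
    · rw [Matrix.smul_mul, Matrix.mul_smul, smul_smul, Matrix.one_mul,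
        ← Complex.ofReal_mul, Real.mul_self_sqrt hρ.le]
    · rw [Matrix.fromBlocks_inj]
      exact ⟨hsq_mul, rfl, rfl, Matrix.one_mul 1⟩
  have hsqrtB : hB.posSemidef.sqrt = R := (hRpsd.eq_sqrt_of_sq_eq hB.posSemidef hR2).symm
  set Winv : Matrix (Fin 6 ⊕ Fin 7) (Fin 6 ⊕ Fin 7) ℂ := Matrix.fromBlocks T 0 0 1 with hWinvdef
  set Rinv : Matrix StateIdx StateIdx ℂ :=
    Matrix.fromBlocks ((c : ℂ) • 1) 0 0 Winv with hRinvdef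
  have hinv : invSqrt hB = Rinv := by
    rw [invSqrt, hsqrtB]
    apply Matrix.inv_eq_left_inv
    rw [hRinvdef, hRdef, hWinvdef, hWdef, Matrix.fromBlocks_multiply, Matrix.fromBlocks_multiply]
    simp only [Matrix.mul_zero, Matrix.zero_mul, add_zero, zero_add]
    rw [← Matrix.fromBlocks_one, Matrix.fromBlocks_inj]
    refine ⟨?_, rfl, rfl, ?_⟩
    · rw [Matrix.smul_mul, Matrix.mul_smul, smul_smul, Matrix.one_mul,
        ← Complex.ofReal_mul, hcdef, inv_mul_cancel₀ (Real.sqrt_pos.mpr hρ).ne']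
      simp
    · rw [← Matrix.fromBlocks_one (m := Fin 7), Matrix.fromBlocks_inj]
      exact ⟨hTsq, rfl, rfl, Matrix.one_mul 1⟩
  -- the sandwiched matrix
  set Y : Matrix (Fin 3) (Fin 6) ℂ := Cmat α * T with hYdef
  set F : Matrix (Fin 3) (Fin 6 ⊕ Fin 7) ℂ := Matrix.fromCols Y 0 with hFdef
  have hFH : Fᴴ = Matrix.fromRows (T * (Cmat α)ᵀ) 0 := by
    rw [hFdef, Matrix.conjTranspose_fromCols_eq_fromRows_conjTranspose,
      Matrix.conjTranspose_zero, hYdef, Matrix.conjTranspose_mul, hTherm.eq,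
      Cmat_conjTranspose]
  have hM : invSqrt hB * Amat α * invSqrt hB = (c : ℂ) • Matrix.fromBlocks 0 F Fᴴ 0 := by
    rw [hinv, Amat, hRinvdef, Matrix.fromBlocks_multiply, Matrix.fromBlocks_multiply]
    simp only [Matrix.zero_mul, Matrix.mul_zero, add_zero, zero_add, Matrix.smul_mul,
      Matrix.mul_smul, Matrix.one_mul, Matrix.mul_one, smul_zero, Matrix.fromBlocks_smul,
      Matrix.fromBlocks_inj]
    refine ⟨by simp, ?_, ?_, by simp⟩
    · rw [hFdef, hYdef, Matrix.fromCols_mul_fromBlocks]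
      simp
    · rw [hFH, Matrix.fromBlocks_mul_fromRows]
      simp
  -- norm bounds
  have hGle : ‖Matrix.fromBlocks 0 F Fᴴ 0‖ ≤ ‖F‖ := norm_offdiag_le F
  have hFY : ‖F‖ = ‖Y‖ := norm_fromCols_zero Y
  have hYT : ‖Y‖ ≤ ‖T‖ := by
    calc ‖Cmat α * T‖ ≤ ‖Cmat α‖ * ‖T‖ := Matrix.l2_opNorm_mul _ _
      _ = ‖T‖ := by rw [Cmat_norm, one_mul]
  have hMnorm : ‖invSqrt hB * Amat α * invSqrt hB‖ ≤ c * ‖T‖ := by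
    rw [hM, norm_smul]
    have hcn : ‖(c : ℂ)‖ = c := by
      rw [Complex.norm_real, Real.norm_eq_abs, abs_of_pos hcpos]
    rw [hcn]
    exact mul_le_mul_of_nonneg_left (hGle.trans (hFY.le.trans hYT)) hcpos.le
  -- rank bounds
  have hrankA : (Amat α).rank ≤ 6 := by
    have hfac : Amat α = (Matrix.fromBlocks (1 : Matrix (Fin 3) (Fin 3) ℂ) 0 0
        (Matrix.fromRows (Cmat α)ᵀ 0) : Matrix StateIdx (Fin 3 ⊕ Fin 3) ℂ) *
        (Matrix.fromBlocks 0 (Matrix.fromCols (Cmat α) 0) 1 0 : Matrix (Fin 3 ⊕ Fin 3) StateIdx ℂ) := by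
      rw [Matrix.fromBlocks_multiply, Amat]
      simp only [Matrix.mul_zero, Matrix.zero_mul, add_zero, zero_add, Matrix.one_mul,
        Matrix.mul_one]
    have hstep1 : (Amat α).rank ≤ (Matrix.fromBlocks (1 : Matrix (Fin 3) (Fin 3) ℂ) 0 0
        (Matrix.fromRows (Cmat α)ᵀ 0) : Matrix StateIdx (Fin 3 ⊕ Fin 3) ℂ).rank := by
      rw [hfac]; exact Matrix.rank_mul_le_left _ _
    have hstep2 : (Matrix.fromBlocks (1 : Matrix (Fin 3) (Fin 3) ℂ) 0 0
        (Matrix.fromRows (Cmat α)ᵀ 0) : Matrix StateIdx (Fin 3 ⊕ Fin 3) ℂ).rank ≤ 6 := by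
      simpa using Matrix.rank_le_card_width (Matrix.fromBlocks (1 : Matrix (Fin 3) (Fin 3) ℂ) 0 0
        (Matrix.fromRows (Cmat α)ᵀ 0) : Matrix StateIdx (Fin 3 ⊕ Fin 3) ℂ)
    exact hstep1.trans hstep2
  have hrankM : (invSqrt hB * Amat α * invSqrt hB).rank ≤ 6 :=
    (Matrix.rank_mul_le_left _ _).trans ((Matrix.rank_mul_le_right _ _).trans hrankA)
  have hM0 : (0:ℝ) ≤ ‖invSqrt hB * Amat α * invSqrt hB‖ := norm_nonneg _
  have h2 : traceNorm (invSqrt hB * Amat α * invSqrt hB) ≤ 6 * (c * ‖T‖) := by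
    calc traceNorm (invSqrt hB * Amat α * invSqrt hB)
        ≤ ((invSqrt hB * Amat α * invSqrt hB).rank : ℝ) * ‖invSqrt hB * Amat α * invSqrt hB‖ :=
          traceNorm_le_rank_mul_norm _
      _ ≤ 6 * ‖invSqrt hB * Amat α * invSqrt hB‖ :=
          mul_le_mul_of_nonneg_right (by exact_mod_cast hrankM) hM0
      _ ≤ 6 * (c * ‖T‖) := mul_le_mul_of_nonneg_left hMnorm (by norm_num)
  have hrankM2 : ((invSqrt hB * Amat α * invSqrt hB) ^ 2).rank ≤ 6 := by
    rw [pow_two]; exact (Matrix.rank_mul_le_left _ _).trans hrankM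
  have hnormM2 : ‖(invSqrt hB * Amat α * invSqrt hB) ^ 2‖ ≤ (c * ‖T‖) * (c * ‖T‖) := by
    rw [pow_two]
    exact (Matrix.l2_opNorm_mul _ _).trans (mul_le_mul hMnorm hMnorm hM0 (by positivity))
  have hT2 : ‖T‖ * ‖T‖ = ‖S⁻¹‖ := by
    rw [← Matrix.l2_opNorm_conjTranspose_mul_self T, hTherm.eq, hTT]
  have hc2 : c * c = ρ⁻¹ := by rw [hcdef, ← mul_inv, Real.mul_self_sqrt hρ.le]
  have h3 : traceNorm ((invSqrt hB * Amat α * invSqrt hB) ^ 2) ≤ 6 * (ρ⁻¹ * ‖S⁻¹‖) := by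
    calc traceNorm ((invSqrt hB * Amat α * invSqrt hB) ^ 2)
        ≤ (((invSqrt hB * Amat α * invSqrt hB) ^ 2).rank : ℝ) *
            ‖(invSqrt hB * Amat α * invSqrt hB) ^ 2‖ := traceNorm_le_rank_mul_norm _
      _ ≤ 6 * ‖(invSqrt hB * Amat α * invSqrt hB) ^ 2‖ :=
          mul_le_mul_of_nonneg_right (by exact_mod_cast hrankM2) (norm_nonneg _)
      _ ≤ 6 * ((c * ‖T‖) * (c * ‖T‖)) := mul_le_mul_of_nonneg_left hnormM2 (by norm_num)
      _ = 6 * (ρ⁻¹ * ‖S⁻¹‖) := by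
          rw [show (c * ‖T‖) * (c * ‖T‖) = (c * c) * (‖T‖ * ‖T‖) by ring, hc2, hT2]
  refine ⟨?_, ?_, h3⟩
  · rw [hcρ]; exact hMnorm
  · rw [hcρ]; exact h2
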